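/- Let γ ≥ 1 and R⁻ > 0. For ε ∈ (0, R⁻) define m₁(ε) = (((R⁻ − ε)R⁻)²/(2R⁻ − ε))·((h(R⁻) − h(R⁻ − ε))/ε) and m₂(ε) = ((R⁻)²h(R⁻) − (R⁻ − ε)²h(R⁻ − ε))/(ε(2R⁻ − ε)), and let f_ε(R) = m₁(ε)/R + R·h(R) − m₂(ε)R for R > 0. Let R₀(ε) be the unique positive zero of f_ε'. Then R₀(ε) admits the expansion R₀(ε) = R⁻ − ε/2 + ((γ − 3)/(24R⁻))ε² + O(ε³) as ε → 0⁺; that is, the function ε ↦ R₀(ε) − R⁻ + ε/2 − ((γ − 3)/(24R⁻))ε² is O(ε³) as ε → 0 from the right. -/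

import Mathlib

open Real Filter Asymptotics

/-- The enthalpy: `h(ρ) = γ/(γ-1)·ρ^(γ-1)` for `γ > 1` and `h(ρ) = log ρ` for `γ = 1`. -/
noncomputable def enth (γ ρ : ℝ) : ℝ :=
  if γ = 1 then Real.log ρ else γ / (γ - 1) * ρ ^ (γ - 1)

/-- The constant `m₁(ε)` in the profile nonlinearity. -/
noncomputable def m1 (γ Rm ε : ℝ) : ℝ :=
  ((Rm - ε) * Rm) ^ 2 / (2 * Rm - ε) * ((enth γ Rm - enth γ (Rm - ε)) / ε)

/-- The constant `m₂(ε)` in the profile nonlinearity. -/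
noncomputable def m2 (γ Rm ε : ℝ) : ℝ :=
  (Rm ^ 2 * enth γ Rm - (Rm - ε) ^ 2 * enth γ (Rm - ε)) / (ε * (2 * Rm - ε))

noncomputable def Hfun (γ x : ℝ) : ℝ := enth γ x + γ * x ^ (γ - 1)

lemma olem {f f' : ℝ → ℝ} {n : ℕ}
    (hd : ∀ᶠ x in nhds (0:ℝ), HasDerivAt f (f' x) x)
    (h0 : f 0 = 0)
    (hO : f' =O[nhds (0:ℝ)] fun x => x ^ n) :
    f =O[nhds (0:ℝ)] fun x => x ^ (n + 1) := by
  rcases hO.exists_nonneg with ⟨C, hC0, hC⟩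
  rw [Asymptotics.isBigOWith_iff] at hC
  rcases Metric.eventually_nhds_iff.mp (hd.and hC) with ⟨δ, hδ0, hδ⟩
  rw [Asymptotics.isBigO_iff]
  refine ⟨C, Metric.eventually_nhds_iff.mpr ⟨δ, hδ0, fun x hx => ?_⟩⟩
  have hxx : |x| < δ := by simpa [Real.dist_eq] using hx
  set s : Set ℝ := Set.Icc (-|x|) (|x|) with hs
  have hsub : ∀ t ∈ s, dist t 0 < δ := by
    intro t ht
    rw [Real.dist_eq, sub_zero]
    exact lt_of_le_of_lt (abs_le.mpr ⟨ht.1, ht.2⟩) hxx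
  have hders : ∀ t ∈ s, HasDerivWithinAt f (f' t) s t :=
    fun t ht => ((hδ (hsub t ht)).1).hasDerivWithinAt
  have hbound : ∀ t ∈ s, ‖f' t‖ ≤ C * |x| ^ n := by
    intro t ht
    refine le_trans (hδ (hsub t ht)).2 ?_
    have : ‖t ^ n‖ ≤ |x| ^ n := by
      rw [norm_pow, Real.norm_eq_abs]
      exact pow_le_pow_left₀ (abs_nonneg t) (abs_le.mpr ⟨ht.1, ht.2⟩) n
    exact mul_le_mul_of_nonneg_left this hC0
  have h0s : (0:ℝ) ∈ s := ⟨neg_nonpos.mpr (abs_nonneg x), abs_nonneg x⟩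
  have hxs : x ∈ s := ⟨neg_abs_le x, le_abs_self x⟩
  have key := (convex_Icc _ _).norm_image_sub_le_of_norm_hasDerivWithin_le hders hbound h0s hxs
  rw [h0, sub_zero, sub_zero] at key
  calc ‖f x‖ ≤ C * |x| ^ n * ‖x‖ := key
    _ = C * ‖x ^ (n+1)‖ := by
        rw [norm_pow, Real.norm_eq_abs, pow_succ]; ring

lemma chain4 {F0 F1 F2 F3 F4 : ℝ → ℝ}
    (h01 : ∀ᶠ x in nhds (0:ℝ), HasDerivAt F0 (F1 x) x)
    (h12 : ∀ᶠ x in nhds (0:ℝ), HasDerivAt F1 (F2 x) x)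
    (h23 : ∀ᶠ x in nhds (0:ℝ), HasDerivAt F2 (F3 x) x)
    (h34 : ∀ᶠ x in nhds (0:ℝ), HasDerivAt F3 (F4 x) x)
    (z0 : F0 0 = 0) (z1 : F1 0 = 0) (z2 : F2 0 = 0) (z3 : F3 0 = 0)
    (hb : F4 =O[nhds (0:ℝ)] fun _ => (1:ℝ)) :
    F0 =O[nhds (0:ℝ)] fun x => x ^ 4 := by
  have b0 : F4 =O[nhds (0:ℝ)] fun x : ℝ => x ^ (0:ℕ) := by
    simpa using hb
  exact olem h01 z0 (olem h12 z1 (olem h23 z2 (olem h34 z3 b0)))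

lemma hasDerivAt_crpow {x : ℝ} (hx : x ≠ 0) (C p q : ℝ) (hpq : p - 1 = q) :
    HasDerivAt (fun y : ℝ => C * y ^ p) (C * p * x ^ q) x := by
  have h := (Real.hasDerivAt_rpow_const (p := p) (Or.inl hx)).const_mul C
  rw [hpq] at h
  simpa [mul_assoc] using h

lemma hasDerivAt_crpow_comp {w : ℝ → ℝ} {w' x : ℝ} (hw : HasDerivAt w w' x)
    (hx : w x ≠ 0) (C p q : ℝ) (hpq : p - 1 = q) :
    HasDerivAt (fun y => C * (w y) ^ p) (C * p * (w x) ^ q * w') x := by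
  have h := (hasDerivAt_crpow hx C p q hpq).comp x hw
  exact h

lemma hasDerivAt_enth {γ x : ℝ} (hγ : 1 ≤ γ) (hx : 0 < x) :
    HasDerivAt (enth γ) (γ * x ^ (γ - 2)) x := by
  rcases eq_or_lt_of_le hγ with h1 | h1
  · have he : enth γ = fun ρ => Real.log ρ := by
      funext ρ; simp [enth, ← h1]
    rw [he, ← h1]
    have : (1:ℝ) * x ^ ((1:ℝ) - 2) = x⁻¹ := by
      norm_num
      rw [show ((-1:ℝ)) = ((-1 : ℤ) : ℝ) by norm_num, Real.rpow_intCast]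
      simp
    rw [this]
    exact Real.hasDerivAt_log hx.ne'
  · have he : enth γ = fun ρ => γ / (γ - 1) * ρ ^ (γ - 1) := by
      funext ρ; simp [enth, ne_of_gt h1]
    rw [he]
    have h := hasDerivAt_crpow hx.ne' (γ / (γ - 1)) (γ - 1) (γ - 2) (by ring)
    convert h using 2
    rw [div_mul_cancel₀]
    linarith

lemma hasDerivAt_Hfun {γ x : ℝ} (hγ : 1 ≤ γ) (hx : 0 < x) :
    HasDerivAt (Hfun γ) (γ ^ 2 * x ^ (γ - 2)) x := by
  have h := (hasDerivAt_enth hγ hx).add (hasDerivAt_crpow hx.ne' γ (γ - 1) (γ - 2) (by ring))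
  exact h.congr_deriv (by ring)

lemma enth_mono {γ x y : ℝ} (hγ : 1 ≤ γ) (hx : 0 < x) (hxy : x ≤ y) :
    enth γ x ≤ enth γ y := by
  rcases eq_or_lt_of_le hγ with h1 | h1
  · simp [enth, ← h1]
    exact Real.log_le_log hx hxy
  · simp only [enth, if_neg (ne_of_gt h1)]
    have hc : 0 ≤ γ / (γ - 1) := div_nonneg (by linarith) (by linarith)
    exact mul_le_mul_of_nonneg_left (Real.rpow_le_rpow hx.le hxy (by linarith)) hc

lemma Hfun_mono {γ x y : ℝ} (hγ : 1 ≤ γ) (hx : 0 < x) (hxy : x ≤ y) :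
    Hfun γ x ≤ Hfun γ y := by
  unfold Hfun
  have h2 : γ * x ^ (γ - 1) ≤ γ * y ^ (γ - 1) :=
    mul_le_mul_of_nonneg_left (Real.rpow_le_rpow hx.le hxy (by linarith)) (by linarith)
  exact add_le_add (enth_mono hγ hx hxy) h2

lemma r1_bigO {γ a : ℝ} (hγ : 1 ≤ γ) (ha : 0 < a) :
    (fun ε => enth γ (a - ε) - enth γ a + γ * a ^ (γ-2) * ε
      - γ*(γ-2)*(a^(γ-2))/a/2 * ε^2 + γ*(γ-2)*(γ-3)*(a^(γ-2))/a^2/6 * ε^3)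
    =O[nhds (0:ℝ)] fun ε => ε^4 := by
  set X := a ^ (γ-2) with hX
  have hXa : a ^ (γ-3) = X/a := by
    rw [hX, show γ-3 = (γ-2)-1 by ring, Real.rpow_sub ha, Real.rpow_one]
  have hXa2 : a ^ (γ-4) = X/a^2 := by
    rw [hX, show γ-4 = (γ-2)-2 by ring, Real.rpow_sub ha,
      show (2:ℝ) = ((2:ℕ):ℝ) by norm_num, Real.rpow_natCast]
  have hev : ∀ᶠ ε in nhds (0:ℝ), 0 < a - ε :=
    (eventually_lt_nhds ha).mono fun ε h => by linarith
  apply chain4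
    (F1 := fun ε => -(γ * (a-ε)^(γ-2)) + γ*X - γ*(γ-2)*X/a*ε + γ*(γ-2)*(γ-3)*X/a^2/2*ε^2)
    (F2 := fun ε => γ*(γ-2)*(a-ε)^(γ-3) - γ*(γ-2)*X/a + γ*(γ-2)*(γ-3)*X/a^2*ε)
    (F3 := fun ε => -(γ*(γ-2)*(γ-3)*(a-ε)^(γ-4)) + γ*(γ-2)*(γ-3)*X/a^2)
    (F4 := fun ε => γ*(γ-2)*(γ-3)*(γ-4)*(a-ε)^(γ-5))
  · filter_upwards [hev] with ε hε
    have hA : HasDerivAt (fun ε' : ℝ => a - ε') (-1) ε := by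
      simpa using (hasDerivAt_id ε).const_sub a
    have hB : HasDerivAt (fun ε' => enth γ (a - ε')) (γ*(a-ε)^(γ-2) * (-1)) ε := by
      simpa [Function.comp_def] using (hasDerivAt_enth hγ hε).comp ε hA
    have h1 : HasDerivAt (fun ε' : ℝ => γ * X * ε') (γ * X) ε := by
      simpa using (hasDerivAt_id ε).const_mul (γ*X)
    have h2 : HasDerivAt (fun ε' : ℝ => γ*(γ-2)*X/a/2 * ε'^2) (γ*(γ-2)*X/a/2 * (2*ε)) ε := by
      simpa using (hasDerivAt_pow 2 ε).const_mul (γ*(γ-2)*X/a/2)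
    have h3 : HasDerivAt (fun ε' : ℝ => γ*(γ-2)*(γ-3)*X/a^2/6 * ε'^3)
        (γ*(γ-2)*(γ-3)*X/a^2/6 * (3*ε^2)) ε := by
      simpa using (hasDerivAt_pow 3 ε).const_mul (γ*(γ-2)*(γ-3)*X/a^2/6)
    have := (((hB.sub_const (enth γ a)).add h1).sub h2).add h3
    exact this.congr_deriv (by ring)
  · filter_upwards [hev] with ε hε
    have hA : HasDerivAt (fun ε' : ℝ => a - ε') (-1) ε := by
      simpa using (hasDerivAt_id ε).const_sub a
    have hB := hasDerivAt_crpow_comp hA hε.ne' γ (γ-2) (γ-3) (by ring)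
    have h1 : HasDerivAt (fun ε' : ℝ => γ*(γ-2)*X/a*ε') (γ*(γ-2)*X/a) ε := by
      simpa using (hasDerivAt_id ε).const_mul (γ*(γ-2)*X/a)
    have h2 : HasDerivAt (fun ε' : ℝ => γ*(γ-2)*(γ-3)*X/a^2/2*ε'^2)
        (γ*(γ-2)*(γ-3)*X/a^2/2 * (2*ε)) ε := by
      simpa using (hasDerivAt_pow 2 ε).const_mul (γ*(γ-2)*(γ-3)*X/a^2/2)
    have := (((hB.neg.add_const (γ*X)).sub h1).add h2)
    exact this.congr_deriv (by ring)
  · filter_upwards [hev] with ε hε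
    have hA : HasDerivAt (fun ε' : ℝ => a - ε') (-1) ε := by
      simpa using (hasDerivAt_id ε).const_sub a
    have hB := hasDerivAt_crpow_comp hA hε.ne' (γ*(γ-2)) (γ-3) (γ-4) (by ring)
    have h1 : HasDerivAt (fun ε' : ℝ => γ*(γ-2)*(γ-3)*X/a^2*ε') (γ*(γ-2)*(γ-3)*X/a^2) ε := by
      simpa using (hasDerivAt_id ε).const_mul (γ*(γ-2)*(γ-3)*X/a^2)
    have hB' : HasDerivAt (fun ε' : ℝ => γ*(γ-2)*(a-ε')^(γ-3)) (γ*(γ-2)*(γ-3)*(a-ε)^(γ-4)*(-1)) ε := by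
      convert hB using 2 <;> ring
    have := (hB'.sub_const (γ*(γ-2)*X/a)).add h1
    exact this.congr_deriv (by ring)
  · filter_upwards [hev] with ε hε
    have hA : HasDerivAt (fun ε' : ℝ => a - ε') (-1) ε := by
      simpa using (hasDerivAt_id ε).const_sub a
    have hB := hasDerivAt_crpow_comp hA hε.ne' (γ*(γ-2)*(γ-3)) (γ-4) (γ-5) (by ring)
    have hB' : HasDerivAt (fun ε' : ℝ => γ*(γ-2)*(γ-3)*(a-ε')^(γ-4))
        (γ*(γ-2)*(γ-3)*(γ-4)*(a-ε)^(γ-5)*(-1)) ε := by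
      convert hB using 2 <;> ring
    have := (hB'.neg).add_const (γ*(γ-2)*(γ-3)*X/a^2)
    exact this.congr_deriv (by ring)
  · norm_num
  · norm_num [hX]
  · norm_num [hXa]; ring
  · norm_num [hXa2]; ring
  · have h1 : ContinuousAt (fun ε : ℝ => a - ε) 0 := by fun_prop
    have h2 : ContinuousAt (fun x : ℝ => x ^ (γ-5)) ((fun ε : ℝ => a - ε) 0) := by
      apply Real.continuousAt_rpow_const
      left; norm_num; exact ha.ne'
    have h3 : ContinuousAt (fun ε : ℝ => γ*(γ-2)*(γ-3)*(γ-4)*(a-ε)^(γ-5)) 0 :=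
      (continuousAt_const.mul (h2.comp h1))
    exact h3.tendsto.isBigO_one ℝ

lemma r2_bigO {γ a : ℝ} (hγ : 1 ≤ γ) (ha : 0 < a) :
    (fun ε => Hfun γ (a - ε/2 + (γ-3)/(24*a)*ε^2) - enth γ a
      - (a*(γ*a^(γ-2)) + (-(γ^2*a^(γ-2)/2))*ε
         + (γ^2*a^(γ-2)*((γ-3)/(24*a)) + γ^2*(γ-2)*a^(γ-2)/(8*a))*ε^2
         + (-(γ^2*(γ-2)*a^(γ-2)*((γ-3)/(24*a))/(2*a)) - γ^2*(γ-2)*(γ-3)*a^(γ-2)/(48*a^2))*ε^3))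
    =O[nhds (0:ℝ)] fun ε => ε^4 := by
  set c := (γ-3)/(24*a) with hc
  set X := a ^ (γ-2) with hX
  have hXa : a ^ (γ-3) = X/a := by
    rw [hX, show γ-3 = (γ-2)-1 by ring, Real.rpow_sub ha, Real.rpow_one]
  have hXa2 : a ^ (γ-4) = X/a^2 := by
    rw [hX, show γ-4 = (γ-2)-2 by ring, Real.rpow_sub ha,
      show (2:ℝ) = ((2:ℕ):ℝ) by norm_num, Real.rpow_natCast]
  have hXA1 : a ^ (γ-1) = X*a := by
    rw [hX, show γ-1 = (γ-2)+1 by ring, Real.rpow_add_one ha.ne']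
  have hcont : ContinuousAt (fun ε : ℝ => a - ε/2 + c*ε^2) 0 := by fun_prop
  have h0v : (fun ε : ℝ => a - ε/2 + c*ε^2) 0 = a := by norm_num
  have hev : ∀ᶠ ε in nhds (0:ℝ), 0 < a - ε/2 + c*ε^2 := by
    have hm : Set.Ioi (0:ℝ) ∈ nhds ((fun ε : ℝ => a - ε/2 + c*ε^2) 0) := by
      rw [h0v]; exact Ioi_mem_nhds ha
    exact hcont.eventually_mem hm
  have hψd : ∀ ε : ℝ, HasDerivAt (fun ε' : ℝ => a - ε'/2 + c*ε'^2) (-(1/2) + c*(2*ε)) ε := by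
    intro ε
    have h1 : HasDerivAt (fun ε' : ℝ => a - ε'/2) (-(1/2)) ε := by
      simpa using ((hasDerivAt_id ε).div_const 2).const_sub a
    have h2 : HasDerivAt (fun ε' : ℝ => c*ε'^2) (c*(2*ε)) ε := by
      simpa [mul_comm] using (hasDerivAt_pow 2 ε).const_mul c
    exact h1.add h2
  have hgd : ∀ ε : ℝ, HasDerivAt (fun ε' : ℝ => -(1/2) + c*(2*ε')) (c*2) ε := by
    intro ε
    have h := (((hasDerivAt_id ε).const_mul (2:ℝ)).const_mul c).const_add (-(1/2) : ℝ)
    exact h.congr_deriv (by ring)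
  apply chain4
    (F1 := fun ε => γ^2*(a - ε/2 + c*ε^2)^(γ-2) * (-(1/2) + c*(2*ε))
      - (-(γ^2*X/2) + 2*(γ^2*X*c + γ^2*(γ-2)*X/(8*a))*ε
         + 3*(-(γ^2*(γ-2)*X*c/(2*a)) - γ^2*(γ-2)*(γ-3)*X/(48*a^2))*ε^2))
    (F2 := fun ε => γ^2*(γ-2)*(a - ε/2 + c*ε^2)^(γ-3) * (-(1/2) + c*(2*ε))^2
      + γ^2*(a - ε/2 + c*ε^2)^(γ-2) * (2*c)
      - (2*(γ^2*X*c + γ^2*(γ-2)*X/(8*a))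
         + 6*(-(γ^2*(γ-2)*X*c/(2*a)) - γ^2*(γ-2)*(γ-3)*X/(48*a^2))*ε))
    (F3 := fun ε => γ^2*(γ-2)*(γ-3)*(a - ε/2 + c*ε^2)^(γ-4) * (-(1/2) + c*(2*ε))^3
      + 3*(γ^2*(γ-2)*(a - ε/2 + c*ε^2)^(γ-3)) * (-(1/2) + c*(2*ε)) * (2*c)
      - 6*(-(γ^2*(γ-2)*X*c/(2*a)) - γ^2*(γ-2)*(γ-3)*X/(48*a^2)))
    (F4 := fun ε => γ^2*(γ-2)*(γ-3)*(γ-4)*(a - ε/2 + c*ε^2)^(γ-5) * (-(1/2) + c*(2*ε))^4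
      + 6*(γ^2*(γ-2)*(γ-3)*(a - ε/2 + c*ε^2)^(γ-4)) * (-(1/2) + c*(2*ε))^2 * (2*c)
      + 3*(γ^2*(γ-2)*(a - ε/2 + c*ε^2)^(γ-3)) * (2*c)^2)
  · filter_upwards [hev] with ε hε
    have hH : HasDerivAt (fun ε' => Hfun γ (a - ε'/2 + c*ε'^2))
        (γ^2*(a - ε/2 + c*ε^2)^(γ-2) * (-(1/2) + c*(2*ε))) ε := by
      simpa [Function.comp_def] using (hasDerivAt_Hfun hγ hε).comp ε (hψd ε)
    have hlin : HasDerivAt (fun ε' : ℝ => (-(γ^2*X/2))*ε')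
        (-(γ^2*X/2)) ε := by simpa using (hasDerivAt_id ε).const_mul (-(γ^2*X/2))
    have hsq : HasDerivAt (fun ε' : ℝ => (γ^2*X*c + γ^2*(γ-2)*X/(8*a))*ε'^2)
        ((γ^2*X*c + γ^2*(γ-2)*X/(8*a))*(2*ε)) ε := by
      simpa using (hasDerivAt_pow 2 ε).const_mul (γ^2*X*c + γ^2*(γ-2)*X/(8*a))
    have hcub : HasDerivAt (fun ε' : ℝ =>
        (-(γ^2*(γ-2)*X*c/(2*a)) - γ^2*(γ-2)*(γ-3)*X/(48*a^2))*ε'^3)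
        ((-(γ^2*(γ-2)*X*c/(2*a)) - γ^2*(γ-2)*(γ-3)*X/(48*a^2))*(3*ε^2)) ε := by
      simpa using (hasDerivAt_pow 3 ε).const_mul
        (-(γ^2*(γ-2)*X*c/(2*a)) - γ^2*(γ-2)*(γ-3)*X/(48*a^2))
    have H := (hH.sub_const (enth γ a)).sub
      ((((hlin.const_add (a*(γ*X))).add hsq).add hcub))
    have heq : (fun ε' => Hfun γ (a - ε'/2 + c*ε'^2) - enth γ a
        - (a*(γ*X) + (-(γ^2*X/2))*ε'
           + (γ^2*X*c + γ^2*(γ-2)*X/(8*a))*ε'^2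
           + (-(γ^2*(γ-2)*X*c/(2*a)) - γ^2*(γ-2)*(γ-3)*X/(48*a^2))*ε'^3))
        = (fun ε' => (Hfun γ (a - ε'/2 + c*ε'^2) - enth γ a)
          - ((a*(γ*X) + (-(γ^2*X/2))*ε')
             + (γ^2*X*c + γ^2*(γ-2)*X/(8*a))*ε'^2
             + (-(γ^2*(γ-2)*X*c/(2*a)) - γ^2*(γ-2)*(γ-3)*X/(48*a^2))*ε'^3)) := by
      funext t; ring
    rw [heq]
    exact H.congr_deriv (by ring)
  · filter_upwards [hev] with ε hε
    have hf := hasDerivAt_crpow_comp (hψd ε) hε.ne' (γ^2) (γ-2) (γ-3) (by ring)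
    have hfg := hf.mul (hgd ε)
    have hlin : HasDerivAt (fun ε' : ℝ => 2*(γ^2*X*c + γ^2*(γ-2)*X/(8*a))*ε')
        (2*(γ^2*X*c + γ^2*(γ-2)*X/(8*a))) ε := by
      simpa using (hasDerivAt_id ε).const_mul (2*(γ^2*X*c + γ^2*(γ-2)*X/(8*a)))
    have hsq : HasDerivAt (fun ε' : ℝ =>
        3*(-(γ^2*(γ-2)*X*c/(2*a)) - γ^2*(γ-2)*(γ-3)*X/(48*a^2))*ε'^2)
        (3*(-(γ^2*(γ-2)*X*c/(2*a)) - γ^2*(γ-2)*(γ-3)*X/(48*a^2))*(2*ε)) ε := by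
      simpa using (hasDerivAt_pow 2 ε).const_mul
        (3*(-(γ^2*(γ-2)*X*c/(2*a)) - γ^2*(γ-2)*(γ-3)*X/(48*a^2)))
    have H := hfg.sub ((hlin.const_add (-(γ^2*X/2))).add hsq)
    have heq : (fun ε' => γ^2*(a - ε'/2 + c*ε'^2)^(γ-2) * (-(1/2) + c*(2*ε'))
        - (-(γ^2*X/2) + 2*(γ^2*X*c + γ^2*(γ-2)*X/(8*a))*ε'
           + 3*(-(γ^2*(γ-2)*X*c/(2*a)) - γ^2*(γ-2)*(γ-3)*X/(48*a^2))*ε'^2))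
        = (fun ε' => (γ^2*(a - ε'/2 + c*ε'^2)^(γ-2)) * (-(1/2) + c*(2*ε'))
          - ((-(γ^2*X/2) + 2*(γ^2*X*c + γ^2*(γ-2)*X/(8*a))*ε')
             + 3*(-(γ^2*(γ-2)*X*c/(2*a)) - γ^2*(γ-2)*(γ-3)*X/(48*a^2))*ε'^2)) := by
      funext t; ring
    rw [heq]
    exact H.congr_deriv (by ring)
  · filter_upwards [hev] with ε hε
    have hf3 := hasDerivAt_crpow_comp (hψd ε) hε.ne' (γ^2*(γ-2)) (γ-3) (γ-4) (by ring)
    have hT1 := hf3.mul ((hgd ε).fun_pow 2)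
    have hf2 := hasDerivAt_crpow_comp (hψd ε) hε.ne' (γ^2) (γ-2) (γ-3) (by ring)
    have hT2 := hf2.mul_const (2*c)
    have hlin : HasDerivAt (fun ε' : ℝ =>
        6*(-(γ^2*(γ-2)*X*c/(2*a)) - γ^2*(γ-2)*(γ-3)*X/(48*a^2))*ε')
        (6*(-(γ^2*(γ-2)*X*c/(2*a)) - γ^2*(γ-2)*(γ-3)*X/(48*a^2))) ε := by
      simpa using (hasDerivAt_id ε).const_mul
        (6*(-(γ^2*(γ-2)*X*c/(2*a)) - γ^2*(γ-2)*(γ-3)*X/(48*a^2)))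
    have H := (hT1.add hT2).sub (hlin.const_add (2*(γ^2*X*c + γ^2*(γ-2)*X/(8*a))))
    have heq : (fun ε' => γ^2*(γ-2)*(a - ε'/2 + c*ε'^2)^(γ-3) * (-(1/2) + c*(2*ε'))^2
        + γ^2*(a - ε'/2 + c*ε'^2)^(γ-2) * (2*c)
        - (2*(γ^2*X*c + γ^2*(γ-2)*X/(8*a))
           + 6*(-(γ^2*(γ-2)*X*c/(2*a)) - γ^2*(γ-2)*(γ-3)*X/(48*a^2))*ε'))
        = (fun ε' => ((γ^2*(γ-2)*(a - ε'/2 + c*ε'^2)^(γ-3)) * ((-(1/2) + c*(2*ε'))^2)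
          + (γ^2*(a - ε'/2 + c*ε'^2)^(γ-2)) * (2*c))
          - (2*(γ^2*X*c + γ^2*(γ-2)*X/(8*a))
             + 6*(-(γ^2*(γ-2)*X*c/(2*a)) - γ^2*(γ-2)*(γ-3)*X/(48*a^2))*ε')) := by
      funext t; ring
    rw [heq]
    exact H.congr_deriv (by ring)
  · filter_upwards [hev] with ε hε
    have hf4 := hasDerivAt_crpow_comp (hψd ε) hε.ne' (γ^2*(γ-2)*(γ-3)) (γ-4) (γ-5) (by ring)
    have hT1 := hf4.mul ((hgd ε).fun_pow 3)
    have hf3 := hasDerivAt_crpow_comp (hψd ε) hε.ne' (γ^2*(γ-2)) (γ-3) (γ-4) (by ring)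
    have hT2 := ((hf3.const_mul 3).mul (hgd ε)).mul_const (2*c)
    have H := (hT1.add hT2).sub_const
      (6*(-(γ^2*(γ-2)*X*c/(2*a)) - γ^2*(γ-2)*(γ-3)*X/(48*a^2)))
    have heq : (fun ε' => γ^2*(γ-2)*(γ-3)*(a - ε'/2 + c*ε'^2)^(γ-4) * (-(1/2) + c*(2*ε'))^3
        + 3*(γ^2*(γ-2)*(a - ε'/2 + c*ε'^2)^(γ-3)) * (-(1/2) + c*(2*ε')) * (2*c)
        - 6*(-(γ^2*(γ-2)*X*c/(2*a)) - γ^2*(γ-2)*(γ-3)*X/(48*a^2)))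
        = (fun ε' => ((γ^2*(γ-2)*(γ-3)*(a - ε'/2 + c*ε'^2)^(γ-4)) * ((-(1/2) + c*(2*ε'))^3)
          + (3*(γ^2*(γ-2)*(a - ε'/2 + c*ε'^2)^(γ-3))) * (-(1/2) + c*(2*ε')) * (2*c))
          - 6*(-(γ^2*(γ-2)*X*c/(2*a)) - γ^2*(γ-2)*(γ-3)*X/(48*a^2))) := by
      funext t; ring
    rw [heq]
    exact H.congr_deriv (by ring)
  · show Hfun γ (a - 0/2 + c*0^2) - enth γ a - _ = 0
    rw [show a - 0/2 + c*0^2 = a by norm_num]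
    simp only [Hfun, hXA1]
    ring
  · rw [show a - 0/2 + c*0^2 = a by norm_num]
    rw [← hX]
    ring
  · rw [show a - 0/2 + c*0^2 = a by norm_num]
    rw [← hX, hXa]
    field_simp
    ring
  · rw [show a - 0/2 + c*0^2 = a by norm_num]
    rw [hXa, hXa2]
    field_simp
    ring
  · have h3 : ContinuousAt (fun ε : ℝ => (a - ε/2 + c*ε^2) ^ (γ-5)) 0 :=
      hcont.rpow_const (Or.inl (by norm_num [ha.ne']))
    have h5 : ContinuousAt (fun ε : ℝ => (a - ε/2 + c*ε^2) ^ (γ-4)) 0 :=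
      hcont.rpow_const (Or.inl (by norm_num [ha.ne']))
    have h7 : ContinuousAt (fun ε : ℝ => (a - ε/2 + c*ε^2) ^ (γ-3)) 0 :=
      hcont.rpow_const (Or.inl (by norm_num [ha.ne']))
    have p4 : ContinuousAt (fun ε : ℝ => (-(1/2) + c*(2*ε))^4) 0 := by fun_prop
    have p2 : ContinuousAt (fun ε : ℝ => (-(1/2) + c*(2*ε))^2) 0 := by fun_prop
    have hC : ContinuousAt (fun ε : ℝ =>
        γ^2*(γ-2)*(γ-3)*(γ-4)*(a - ε/2 + c*ε^2)^(γ-5) * (-(1/2) + c*(2*ε))^4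
        + 6*(γ^2*(γ-2)*(γ-3)*(a - ε/2 + c*ε^2)^(γ-4)) * (-(1/2) + c*(2*ε))^2 * (2*c)
        + 3*(γ^2*(γ-2)*(a - ε/2 + c*ε^2)^(γ-3)) * (2*c)^2) 0 :=
      (((continuousAt_const.mul h3).mul p4).add
        (((continuousAt_const.mul (continuousAt_const.mul h5)).mul p2).mul continuousAt_const)).add
        ((continuousAt_const.mul (continuousAt_const.mul h7)).mul continuousAt_const)
    exact hC.tendsto.isBigO_one ℝ

set_option maxHeartbeats 2000000 in
lemma key_identity (γ a X ε : ℝ) (ha : a ≠ 0) :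
    (ε*(2*a-ε)*(a - ε/2 + (γ-3)/(24*a)*ε^2)^2)
      * (a*(γ*X) + (-(γ^2*X/2))*ε
         + (γ^2*X*((γ-3)/(24*a)) + γ^2*(γ-2)*X/(8*a))*ε^2
         + (-(γ^2*(γ-2)*X*((γ-3)/(24*a))/(2*a)) - γ^2*(γ-2)*(γ-3)*X/(48*a^2))*ε^3)
    + ((a-ε)^2*(a^2 + (a - ε/2 + (γ-3)/(24*a)*ε^2)^2))
      * (-(γ*X*ε) + γ*(γ-2)*X/a/2*ε^2 - γ*(γ-2)*(γ-3)*X/a^2/6*ε^3)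
    = ε^4 * ( (X*a)*((17/8)*γ - (25/12)*γ^2 + (17/24)*γ^3 - (1/12)*γ^4)
      + X*(-(191/64)*γ + (301/96)*γ^2 - (655/576)*γ^3 + (5/36)*γ^4)*ε
      + (X/a)*(γ - (407/384)*γ^2 + (179/576)*γ^3 - (1/1152)*γ^4 - (1/144)*γ^5)*ε^2
      + (X/a^2)*((1/8)*γ - (75/256)*γ^2 + (43/192)*γ^3 - (473/6912)*γ^4 + (25/3456)*γ^5)*ε^3
      + (X/a^3)*(-(7/64)*γ + (75/512)*γ^2 - (13/192)*γ^3 + (155/13824)*γ^4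
          + (1/6912)*γ^5 - (1/6912)*γ^6)*ε^4
      + (X/a^4)*(-(1/64)*γ + (7/256)*γ^2 - (29/1536)*γ^3 + (89/13824)*γ^4
          - (5/4608)*γ^5 + (1/13824)*γ^6)*ε^5 ) := by
  field_simp
  ring

set_option maxHeartbeats 1000000 in
lemma E_bigO {γ a : ℝ} (hγ : 1 ≤ γ) (ha : 0 < a) :
    (fun ε => Hfun γ (a - ε/2 + (γ-3)/(24*a)*ε^2)
      - m1 γ a ε / (a - ε/2 + (γ-3)/(24*a)*ε^2)^2 - m2 γ a ε)
    =O[nhdsWithin 0 (Set.Ioi 0)] fun ε => ε^3 := by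
  have hr1 := r1_bigO hγ ha
  have hr2 := r2_bigO hγ ha
  set X := a ^ (γ-2) with hX
  set c := (γ-3)/(24*a) with hc
  clear_value X c
  have hcont : ContinuousAt (fun ε : ℝ => a - ε/2 + c*ε^2) 0 := by fun_prop
  have hψpos : ∀ᶠ ε in nhds (0:ℝ), 0 < a - ε/2 + c*ε^2 := by
    have hm : Set.Ioi (0:ℝ) ∈ nhds ((fun ε : ℝ => a - ε/2 + c*ε^2) 0) := by
      have : (fun ε : ℝ => a - ε/2 + c*ε^2) 0 = a := by norm_num
      rw [this]; exact Ioi_mem_nhds ha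
    exact hcont.eventually_mem hm
  -- O(1) facts
  have hAO : (fun ε : ℝ => ε*(2*a-ε)*(a - ε/2 + c*ε^2)^2) =O[nhds (0:ℝ)]
      (fun _ => (1:ℝ)) := by
    exact ((Continuous.continuousAt (by fun_prop)).tendsto).isBigO_one ℝ
  have hKO : (fun ε : ℝ => (a-ε)^2*(a^2 + (a - ε/2 + c*ε^2)^2)) =O[nhds (0:ℝ)]
      (fun _ => (1:ℝ)) := by
    exact ((Continuous.continuousAt (by fun_prop)).tendsto).isBigO_one ℝ
  have hSO : (fun ε : ℝ => (X*a)*((17/8)*γ - (25/12)*γ^2 + (17/24)*γ^3 - (1/12)*γ^4)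
      + X*(-(191/64)*γ + (301/96)*γ^2 - (655/576)*γ^3 + (5/36)*γ^4)*ε
      + (X/a)*(γ - (407/384)*γ^2 + (179/576)*γ^3 - (1/1152)*γ^4 - (1/144)*γ^5)*ε^2
      + (X/a^2)*((1/8)*γ - (75/256)*γ^2 + (43/192)*γ^3 - (473/6912)*γ^4 + (25/3456)*γ^5)*ε^3
      + (X/a^3)*(-(7/64)*γ + (75/512)*γ^2 - (13/192)*γ^3 + (155/13824)*γ^4
          + (1/6912)*γ^5 - (1/6912)*γ^6)*ε^4
      + (X/a^4)*(-(1/64)*γ + (7/256)*γ^2 - (29/1536)*γ^3 + (89/13824)*γ^4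
          - (5/4608)*γ^5 + (1/13824)*γ^6)*ε^5) =O[nhds (0:ℝ)] (fun _ => (1:ℝ)) := by
    exact ((Continuous.continuousAt (by fun_prop)).tendsto).isBigO_one ℝ
  have hQ : (fun ε : ℝ => ε^4 * ((X*a)*((17/8)*γ - (25/12)*γ^2 + (17/24)*γ^3 - (1/12)*γ^4)
      + X*(-(191/64)*γ + (301/96)*γ^2 - (655/576)*γ^3 + (5/36)*γ^4)*ε
      + (X/a)*(γ - (407/384)*γ^2 + (179/576)*γ^3 - (1/1152)*γ^4 - (1/144)*γ^5)*ε^2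
      + (X/a^2)*((1/8)*γ - (75/256)*γ^2 + (43/192)*γ^3 - (473/6912)*γ^4 + (25/3456)*γ^5)*ε^3
      + (X/a^3)*(-(7/64)*γ + (75/512)*γ^2 - (13/192)*γ^3 + (155/13824)*γ^4
          + (1/6912)*γ^5 - (1/6912)*γ^6)*ε^4
      + (X/a^4)*(-(1/64)*γ + (7/256)*γ^2 - (29/1536)*γ^3 + (89/13824)*γ^4
          - (5/4608)*γ^5 + (1/13824)*γ^6)*ε^5)) =O[nhds (0:ℝ)] fun ε => ε^4 := by
    simpa using (isBigO_refl (fun ε : ℝ => ε^4) (nhds 0)).mul hSO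
  have hAr2 : (fun ε : ℝ => (ε*(2*a-ε)*(a - ε/2 + c*ε^2)^2) *
      (Hfun γ (a - ε/2 + c*ε^2) - enth γ a
      - (a*(γ*X) + (-(γ^2*X/2))*ε
         + (γ^2*X*c + γ^2*(γ-2)*X/(8*a))*ε^2
         + (-(γ^2*(γ-2)*X*c/(2*a)) - γ^2*(γ-2)*(γ-3)*X/(48*a^2))*ε^3)))
      =O[nhds (0:ℝ)] fun ε => ε^4 := by
    simpa using hAO.mul hr2
  have hKr1 : (fun ε : ℝ => ((a-ε)^2*(a^2 + (a - ε/2 + c*ε^2)^2)) *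
      (enth γ (a - ε) - enth γ a + γ * X * ε
      - γ*(γ-2)*X/a/2 * ε^2 + γ*(γ-2)*(γ-3)*X/a^2/6 * ε^3))
      =O[nhds (0:ℝ)] fun ε => ε^4 := by
    simpa using hKO.mul hr1
  have hG : (fun ε : ℝ => (ε*(2*a-ε)*(a - ε/2 + c*ε^2)^2) * (Hfun γ (a - ε/2 + c*ε^2) - enth γ a)
      + ((a-ε)^2*(a^2 + (a - ε/2 + c*ε^2)^2)) * (enth γ (a-ε) - enth γ a))
      =O[nhds (0:ℝ)] fun ε => ε^4 := by
    have hsum := hQ.add (hAr2.add hKr1)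
    refine hsum.congr_left fun ε => ?_
    have hk := key_identity γ a X ε ha.ne'
    rw [← hc] at hk
    linear_combination -hk
  have hG' := hG.mono (nhdsWithin_le_nhds (s := Set.Ioi (0:ℝ)))
  have hW : (fun ε : ℝ => ((2*a-ε)*(a - ε/2 + c*ε^2)^2)⁻¹)
      =O[nhdsWithin 0 (Set.Ioi 0)] (fun _ => (1:ℝ)) := by
    have hne : ((fun ε : ℝ => (2*a-ε)*(a - ε/2 + c*ε^2)^2) 0) ≠ 0 := by
      have : ((fun ε : ℝ => (2*a-ε)*(a - ε/2 + c*ε^2)^2) 0) = 2*a^3 := by norm_num; ring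
      rw [this]; positivity
    have hcont2 : ContinuousAt (fun ε : ℝ => ((2*a-ε)*(a - ε/2 + c*ε^2)^2)⁻¹) 0 :=
      ContinuousAt.inv₀ (by fun_prop) hne
    exact (hcont2.tendsto.mono_left nhdsWithin_le_nhds).isBigO_one ℝ
  have hprod := (hG'.mul hW).mul
    (isBigO_refl (fun ε : ℝ => ε⁻¹) (nhdsWithin 0 (Set.Ioi 0)))
  refine hprod.congr' ?_ ?_
  · filter_upwards [self_mem_nhdsWithin,
      eventually_nhdsWithin_of_eventually_nhds hψpos,
      eventually_nhdsWithin_of_eventually_nhds (eventually_lt_nhds ha)] with ε hε hψ hεa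
    have hε0 : (0:ℝ) < ε := hε
    have h2a : 2*a - ε ≠ 0 := by linarith
    show _ = Hfun γ (a - ε/2 + c*ε^2) - m1 γ a ε / (a - ε/2 + c*ε^2)^2 - m2 γ a ε
    rw [m1, m2]
    set P := a - ε/2 + c*ε^2 with hP
    clear_value P
    field_simp [hε0.ne', hψ.ne', h2a]
    ring
  · filter_upwards [self_mem_nhdsWithin] with ε hε
    have hε0 : (0:ℝ) < ε := hε
    field_simp [hε0.ne']

lemma crit_eq {γ a : ℝ} (hγ : 1 ≤ γ) {ε R : ℝ} (hR : 0 < R)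
    (h : deriv (fun R => m1 γ a ε / R + R * enth γ R - m2 γ a ε * R) R = 0) :
    Hfun γ R - m1 γ a ε / R^2 - m2 γ a ε = 0 := by
  have hfun : (fun R => m1 γ a ε / R + R * enth γ R - m2 γ a ε * R)
      = (fun R => m1 γ a ε * R⁻¹ + R * enth γ R - m2 γ a ε * R) := by
    funext y; rw [div_eq_mul_inv]
  rw [hfun] at h
  have h1 : HasDerivAt (fun y : ℝ => m1 γ a ε * y⁻¹) (m1 γ a ε * (-(R^2)⁻¹)) R :=
    (hasDerivAt_inv hR.ne').const_mul (m1 γ a ε)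
  have h2 : HasDerivAt (fun y : ℝ => y * enth γ y)
      (1 * enth γ R + R * (γ * R ^ (γ-2))) R :=
    (hasDerivAt_id' R).mul (hasDerivAt_enth hγ hR)
  have h3 : HasDerivAt (fun y : ℝ => m2 γ a ε * y) (m2 γ a ε * 1) R :=
    (hasDerivAt_id' R).const_mul (m2 γ a ε)
  have H := (h1.fun_add h2).fun_sub h3
  rw [H.deriv] at h
  have hpow : R ^ (γ-1) = R ^ (γ-2) * R := by
    rw [show γ-1 = (γ-2)+1 by ring, Real.rpow_add_one hR.ne']
  rw [Hfun, hpow]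
  have hR2 : R^2 ≠ 0 := pow_ne_zero _ hR.ne'
  field_simp at h ⊢
  linarith [h]

lemma gap_lemma {a x y : ℝ} (ha : 0 < a) (hx : a/2 ≤ x) (hxy : x ≤ y) (hy : y ≤ 3*a) :
    (y - x)/(81*a^3) ≤ 1/x^2 - 1/y^2 := by
  have hx0 : 0 < x := lt_of_lt_of_le (by linarith) hx
  have hy0 : 0 < y := lt_of_lt_of_le hx0 hxy
  have h1 : 1/x^2 - 1/y^2 = (y-x)*(y+x)/(x^2*y^2) := by
    field_simp; ring
  rw [h1, div_le_div_iff₀ (by positivity) (by positivity)]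
  have hx2 : x^2 ≤ 9*a^2 := by nlinarith
  have hy2 : y^2 ≤ 9*a^2 := by nlinarith
  have hxy2 : x^2*y^2 ≤ 81*a^4 := by nlinarith
  have hsum : a ≤ y + x := by linarith
  have hyx : (0:ℝ) ≤ y - x := sub_nonneg.mpr hxy
  nlinarith [mul_le_mul_of_nonneg_left hxy2 hyx,
    mul_le_mul_of_nonneg_left (mul_le_mul_of_nonneg_right hsum (by positivity : (0:ℝ) ≤ 81*a^3)) hyx]

lemma m1_lower {γ a : ℝ} (hγ : 1 ≤ γ) (ha : 0 < a) :
    ∀ᶠ ε in nhdsWithin 0 (Set.Ioi 0), a^3*(γ*a^(γ-2))/4 ≤ m1 γ a ε := by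
  have hd := hasDerivAt_enth (γ := γ) (x := a) hγ ha
  rw [hasDerivAt_iff_tendsto_slope] at hd
  have hmap : Tendsto (fun ε : ℝ => a - ε) (nhdsWithin 0 (Set.Ioi 0))
      (nhdsWithin a {a}ᶜ) := by
    rw [tendsto_nhdsWithin_iff]
    constructor
    · apply Tendsto.mono_left ?_ nhdsWithin_le_nhds
      have h0 : (fun ε : ℝ => a - ε) 0 = a := by norm_num
      have := (ContinuousAt.tendsto (f := fun ε : ℝ => a - ε) (x := 0) (by fun_prop))
      simpa using this
    · filter_upwards [self_mem_nhdsWithin] with ε hε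
      have hε0 : (0:ℝ) < ε := hε
      have : a - ε < a := by linarith
      exact this.ne
  have hslope := hd.comp hmap
  have hslope2 : Tendsto (fun ε : ℝ => (enth γ a - enth γ (a - ε))/ε)
      (nhdsWithin 0 (Set.Ioi 0)) (nhds (γ*a^(γ-2))) := by
    apply hslope.congr'
    filter_upwards [self_mem_nhdsWithin] with ε hε
    have hε0 : (0:ℝ) < ε := hε
    show slope (enth γ) a (a - ε) = _
    rw [slope_def_field, show a - ε - a = -ε by ring, div_neg]
    ring
  have hcoef : Tendsto (fun ε : ℝ => ((a-ε)*a)^2/(2*a-ε)) (nhdsWithin 0 (Set.Ioi 0))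
      (nhds (((a-0)*a)^2/(2*a-0))) := by
    apply Tendsto.mono_left ?_ nhdsWithin_le_nhds
    have hca : ContinuousAt (fun ε : ℝ => ((a-ε)*a)^2/(2*a-ε)) 0 := by
      apply ContinuousAt.div (by fun_prop) (by fun_prop)
      norm_num
      exact ha.ne'
    exact hca.tendsto
  have hm1t : Tendsto (fun ε => m1 γ a ε) (nhdsWithin 0 (Set.Ioi 0))
      (nhds (((a-0)*a)^2/(2*a-0) * (γ*a^(γ-2)))) := by
    have := hcoef.mul hslope2
    simpa only [m1] using this
  apply hm1t.eventually (eventually_ge_nhds ?_)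
  have he : ((a-0)*a)^2/(2*a-0) = a^3/2 := by
    field_simp
    ring
  rw [he]
  have hX0 : 0 < a^(γ-2) := Real.rpow_pos_of_pos ha _
  have hγ0 : (0:ℝ) < γ := by linarith
  nlinarith [mul_pos (pow_pos ha 3) (mul_pos hγ0 hX0)]

/-- Expansion of the unique positive critical point `R₀(ε)` of the profile nonlinearity:
`R₀(ε) = R⁻ − ε/2 + ((γ−3)/(24R⁻))ε² + O(ε³)` as `ε → 0⁺`. -/
theorem stmt11 (γ Rm : ℝ) (hγ : 1 ≤ γ) (hRm : 0 < Rm) (R₀ : ℝ → ℝ)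
    (hR₀ : ∀ ε ∈ Set.Ioo (0:ℝ) Rm, 0 < R₀ ε ∧
      deriv (fun R => m1 γ Rm ε / R + R * enth γ R - m2 γ Rm ε * R) (R₀ ε) = 0) :
    (fun ε => R₀ ε - Rm + ε / 2 - (γ - 3) / (24 * Rm) * ε ^ 2)
      =O[nhdsWithin 0 (Set.Ioi 0)] (fun ε => ε ^ 3) := by
  have hE := E_bigO (γ := γ) (a := Rm) hγ hRm
  obtain ⟨K0, hK00, hK0w⟩ := hE.exists_nonneg
  rw [Asymptotics.isBigOWith_iff] at hK0w
  have hm1low := m1_lower hγ hRm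
  set c := (γ-3)/(24*Rm) with hc
  set h1 := γ*Rm^(γ-2) with hh1
  have hh1pos : 0 < h1 := mul_pos (by linarith) (Real.rpow_pos_of_pos hRm _)
  set μ := Rm^3*h1/4 with hμ
  have hμpos : 0 < μ := by
    rw [hμ]; exact div_pos (mul_pos (pow_pos hRm 3) hh1pos) (by norm_num)
  set M := 81*Rm^3*(K0+1)/μ with hM
  have hMpos : 0 < M := by
    rw [hM]
    exact div_pos (mul_pos (by positivity) (by linarith)) hμpos
  clear_value h1 μ M
  rw [Asymptotics.isBigO_iff]
  refine ⟨M, ?_⟩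
  -- eventual facts
  have hct : ContinuousAt (fun ε : ℝ => Rm - ε/2 + c*ε^2) 0 := by fun_prop
  have h00 : (fun ε : ℝ => Rm - ε/2 + c*ε^2) 0 = Rm := by norm_num
  have hψt : Tendsto (fun ε : ℝ => Rm - ε/2 + c*ε^2) (nhdsWithin 0 (Set.Ioi 0)) (nhds Rm) := by
    have := hct.tendsto
    norm_num at this
    exact this.mono_left nhdsWithin_le_nhds
  have hψlb := hψt.eventually (eventually_ge_nhds (show 3*Rm/4 < Rm by linarith))
  have hψub := hψt.eventually (eventually_le_nhds (show Rm < 5*Rm/4 by linarith))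
  have hδt : Tendsto (fun ε : ℝ => M*ε^3) (nhdsWithin 0 (Set.Ioi 0)) (nhds 0) := by
    have hcd : ContinuousAt (fun ε : ℝ => M*ε^3) 0 := by fun_prop
    have := hcd.tendsto
    norm_num at this
    exact this.mono_left nhdsWithin_le_nhds
  have hδev := hδt.eventually (eventually_le_nhds (show (0:ℝ) < Rm/4 by linarith))
  have hεa : ∀ᶠ ε in nhdsWithin (0:ℝ) (Set.Ioi 0), ε < Rm :=
    eventually_nhdsWithin_of_eventually_nhds (eventually_lt_nhds hRm)
  filter_upwards [hK0w, hm1low, hψlb, hψub, hδev, hεa, self_mem_nhdsWithin]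
    with ε hEb hm1b hψl hψu hδb hεRm hεpos
  have hε0 : (0:ℝ) < ε := hεpos
  set ψ := Rm - ε/2 + c*ε^2 with hψdef
  set δ := M*ε^3 with hδdef
  have hδpos : 0 < δ := by rw [hδdef]; exact mul_pos hMpos (pow_pos hε0 3)
  clear_value ψ δ
  obtain ⟨hR0pos, hR0crit⟩ := hR₀ ε ⟨hε0, hεRm⟩
  have hcrit := crit_eq hγ hR0pos hR0crit
  have hm1nn : 0 ≤ m1 γ Rm ε := le_trans hμpos.le hm1b
  have hgmono : ∀ x y : ℝ, 0 < x → x ≤ y →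
      Hfun γ x - m1 γ Rm ε/x^2 - m2 γ Rm ε ≤ Hfun γ y - m1 γ Rm ε/y^2 - m2 γ Rm ε := by
    intro x y hx hxy
    have hHm := Hfun_mono hγ hx hxy
    have hinv : 1/y^2 ≤ 1/x^2 :=
      one_div_le_one_div_of_le (pow_pos hx 2) (pow_le_pow_left₀ hx.le hxy 2)
    have h2 : m1 γ Rm ε/y^2 ≤ m1 γ Rm ε/x^2 := by
      calc m1 γ Rm ε/y^2 = m1 γ Rm ε*(1/y^2) := by ring
        _ ≤ m1 γ Rm ε*(1/x^2) := mul_le_mul_of_nonneg_left hinv hm1nn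
        _ = m1 γ Rm ε/x^2 := by ring
    linarith
  have hψpos : 0 < ψ := by linarith
  have hEc : |Hfun γ ψ - m1 γ Rm ε/ψ^2 - m2 γ Rm ε| ≤ K0*ε^3 := by
    have h := hEb
    rw [Real.norm_eq_abs, Real.norm_eq_abs, abs_of_pos (pow_pos hε0 3)] at h
    exact h
  have habs2 := abs_le.mp hEc
  have hkey : μ*(δ/(81*Rm^3)) = (K0+1)*ε^3 := by
    rw [hδdef, hM]
    field_simp [hμpos.ne']
  -- upper bound
  have hup : R₀ ε ≤ ψ + δ := by
    by_contra hcon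
    push_neg at hcon
    have h1le : Hfun γ (ψ+δ) - m1 γ Rm ε/(ψ+δ)^2 - m2 γ Rm ε ≤ 0 := by
      have := hgmono (ψ+δ) (R₀ ε) (by linarith) hcon.le
      linarith [hcrit]
    have hgap := gap_lemma (a := Rm) (x := ψ) (y := ψ+δ) hRm (by linarith) (by linarith)
      (by linarith)
    have hgap2 : δ/(81*Rm^3) ≤ 1/ψ^2 - 1/(ψ+δ)^2 := by
      have : ψ + δ - ψ = δ := by ring
      rwa [this] at hgap
    have hstep : μ*(δ/(81*Rm^3)) ≤ m1 γ Rm ε*(1/ψ^2 - 1/(ψ+δ)^2) :=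
      mul_le_mul hm1b hgap2 (by positivity) hm1nn
    have hsplit : (Hfun γ ψ - m1 γ Rm ε/ψ^2 - m2 γ Rm ε)
        + m1 γ Rm ε*(1/ψ^2 - 1/(ψ+δ)^2)
        = Hfun γ ψ - m1 γ Rm ε/(ψ+δ)^2 - m2 γ Rm ε := by
      ring
    have hHm := Hfun_mono hγ hψpos (show ψ ≤ ψ + δ by linarith)
    have : (0:ℝ) < ε^3 := pow_pos hε0 3
    linarith [habs2.1]
  -- lower bound
  have hlow : ψ - δ ≤ R₀ ε := by
    by_contra hcon
    push_neg at hcon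
    have hψδpos : 0 < ψ - δ := by linarith
    have h1le : 0 ≤ Hfun γ (ψ-δ) - m1 γ Rm ε/(ψ-δ)^2 - m2 γ Rm ε := by
      have := hgmono (R₀ ε) (ψ-δ) hR0pos hcon.le
      linarith [hcrit]
    have hgap := gap_lemma (a := Rm) (x := ψ-δ) (y := ψ) hRm (by linarith) (by linarith)
      (by linarith)
    have hgap2 : δ/(81*Rm^3) ≤ 1/(ψ-δ)^2 - 1/ψ^2 := by
      have : ψ - (ψ - δ) = δ := by ring
      rwa [this] at hgap
    have hstep : μ*(δ/(81*Rm^3)) ≤ m1 γ Rm ε*(1/(ψ-δ)^2 - 1/ψ^2) :=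
      mul_le_mul hm1b hgap2 (by positivity) hm1nn
    have hsplit : (Hfun γ ψ - m1 γ Rm ε/ψ^2 - m2 γ Rm ε)
        - m1 γ Rm ε*(1/(ψ-δ)^2 - 1/ψ^2)
        = Hfun γ ψ - m1 γ Rm ε/(ψ-δ)^2 - m2 γ Rm ε := by
      ring
    have hHm := Hfun_mono hγ hψδpos (show ψ - δ ≤ ψ by linarith)
    have : (0:ℝ) < ε^3 := pow_pos hε0 3
    linarith [habs2.2]
  show ‖R₀ ε - Rm + ε/2 - c*ε^2‖ ≤ M*‖ε^3‖
  rw [Real.norm_eq_abs, Real.norm_eq_abs, abs_of_pos (pow_pos hε0 3)]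
  rw [show R₀ ε - Rm + ε/2 - c*ε^2 = R₀ ε - ψ by rw [hψdef]; ring]
  rw [← hδdef]
  exact abs_le.mpr ⟨by linarith, by linarith⟩
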